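/- Let E be a finite-dimensional real normed vector space and let 𝒜 : E → E be a bijective affine map. Define the dimension code D(S) of a set S ⊆ E by D(S) = F (a distinguished symbol, e.g. the value 'none') if S = ∅, and otherwise D(S) = the finrank over ℝ of the direction of the affine span of S. Then for all sets g₁, g₂ ⊆ E and for every choice of operators F₁, F₂, each being one of: the topological interior, the frontier (topological boundary), or the exterior (complement of the closure), the nine-intersection entries are preserved: D( F₁(𝒜(g₁)) ∩ F₂(𝒜(g₂)) ) = D( F₁(g₁) ∩ F₂(g₂) ). In particular, the topological relationship matrix built from interiors, boundaries and exteriors is invariant under applying the same affine equivalence to both geometries. -/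

import Mathlib

open Classical

private lemma image_compl_closure {E : Type*} [NormedAddCommGroup E] [NormedSpace ℝ E]
    (h : E ≃ₜ E) (s : Set E) : h '' (closure s)ᶜ = (closure (h '' s))ᶜ := by
  rw [← h.image_closure, ← Set.image_compl_eq h.bijective]

/-- Let `E` be a finite-dimensional real normed vector space, `𝒜 : E → E` a
bijective affine map, and `D` the dimension code assigning `none` (the symbol `F`) to the empty
set and otherwise the finrank over `ℝ` of the direction of the affine span. Then for all sets
`g₁ g₂ ⊆ E` and all operators `F₁, F₂`, each of which is the interior, the frontier, or the
exterior (complement of the closure), the nine-intersection entries are preserved: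
`D (F₁ (𝒜 '' g₁) ∩ F₂ (𝒜 '' g₂)) = D (F₁ g₁ ∩ F₂ g₂)`. -/
theorem stmt_5 {E : Type*} [NormedAddCommGroup E] [NormedSpace ℝ E] [FiniteDimensional ℝ E]
    (𝒜 : E →ᵃ[ℝ] E) (h𝒜 : Function.Bijective 𝒜)
    (D : Set E → Option ℕ)
    (hD : ∀ S : Set E,
      D S = if S = ∅ then none else some (Module.finrank ℝ (affineSpan ℝ S).direction))
    (g₁ g₂ : Set E) (F₁ F₂ : Set E → Set E)
    (hF₁ : F₁ = interior ∨ F₁ = frontier ∨ F₁ = fun S : Set E => (closure S)ᶜ)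
    (hF₂ : F₂ = interior ∨ F₂ = frontier ∨ F₂ = fun S : Set E => (closure S)ᶜ) :
    D (F₁ (𝒜 '' g₁) ∩ F₂ (𝒜 '' g₂)) = D (F₁ g₁ ∩ F₂ g₂) := by
  set e : E ≃ᵃ[ℝ] E := AffineEquiv.ofBijective h𝒜 with he
  have hcoe : (𝒜 : E → E) = e := rfl
  have h : E ≃ₜ E := e.toHomeomorphOfFiniteDimensional
  have hh : (e.toHomeomorphOfFiniteDimensional : E → E) = e := rfl
  -- images commute with the operators
  have hcomm : ∀ (F : Set E → Set E),
      (F = interior ∨ F = frontier ∨ F = fun S : Set E => (closure S)ᶜ) →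
      ∀ s : Set E, F (𝒜 '' s) = e '' F s := by
    rintro F (rfl | rfl | rfl) s
    · rw [hcoe, ← hh, e.toHomeomorphOfFiniteDimensional.image_interior]
    · rw [hcoe, ← hh, e.toHomeomorphOfFiniteDimensional.image_frontier]
    · rw [hcoe, ← hh, image_compl_closure]
  -- D is invariant under e
  have hDinv : ∀ s : Set E, D (e '' s) = D s := by
    intro s
    rw [hD, hD]; simp only [Set.image_eq_empty]
    by_cases hs : s = ∅
    · simp [hs]
    · rw [if_neg hs, if_neg hs]
      congr 1
      have hcoe2 : (e : E → E) = (e.toAffineMap : E → E) := rfl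
      rw [hcoe2, ← AffineSubspace.map_span e.toAffineMap s, AffineSubspace.map_direction]
      exact LinearEquiv.finrank_map_eq e.linear (affineSpan ℝ s).direction
  rw [hcomm F₁ hF₁, hcomm F₂ hF₂, ← Set.image_inter e.injective, hDinv]
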